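/- Let U be a 1-cotilting (R,S)-bimodule with R = End(U_S), and let M be a finitely related left R-module (there is an exact sequence 0 → K → P → M → 0 with P projective and K finitely generated). Then Hom_S(Ext¹_R(M,U),U) = 0. -/

import Mathlib

set_option linter.unusedVariables false

universe u

open Function LinearMap

/-- `Ext¹_A(M,U) = 0`, encoded as: every short exact sequence `0 → U → E → M → 0` splits. -/
def Ext1Vanishes (A : Type u) [Ring A] (M U : Type u) [AddCommGroup M] [Module A M]
    [AddCommGroup U] [Module A U] : Prop :=
  ∀ (E : Type u) [AddCommGroup E] [Module A E] (i : U →ₗ[A] E) (p : E →ₗ[A] M),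
    Function.Injective i → Function.Surjective p → LinearMap.range i = LinearMap.ker p →
    ∃ s : M →ₗ[A] E, p.comp s = LinearMap.id

/-- `U` is a 1-cotilting left `A`-module: injective dimension at most `1`,
`Ext¹(U^α, U) = 0` for every index type `α`, and `Hom(M,U) = 0 = Ext¹(M,U)` implies `M = 0`. -/
def IsCotilting (A : Type u) [Ring A] (U : Type u) [AddCommGroup U] [Module A U] : Prop :=
  (∃ (E₀ E₁ : ModuleCat.{u} A), Module.Injective A E₀ ∧ Module.Injective A E₁ ∧
    ∃ (ι : U →ₗ[A] E₀) (π : E₀ →ₗ[A] E₁),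
      Function.Injective ι ∧ Function.Surjective π ∧ LinearMap.range ι = LinearMap.ker π) ∧
  (∀ α : Type u, Ext1Vanishes A (α → U) U) ∧
  (∀ (M : Type u) [AddCommGroup M] [Module A M],
    (∀ f : M →ₗ[A] U, f = 0) → Ext1Vanishes A M U → Subsingleton M)

/-- The evaluation map `δ_M : M → Hom_B(Hom_A(M,U),U)`, `m ↦ (φ ↦ φ m)`,
for a bimodule `U` over the rings `A` and `B`. -/
def evalMap (A B : Type u) [Ring A] [Ring B] (U : Type u) [AddCommGroup U] [Module A U]
    [Module B U] [SMulCommClass A B U] [SMulCommClass B A U]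
    (M : Type u) [AddCommGroup M] [Module A M] :
    M →ₗ[A] ((M →ₗ[A] U) →ₗ[B] U) where
  toFun m :=
    { toFun := fun φ => φ m
      map_add' := fun φ ψ => rfl
      map_smul' := fun b φ => rfl }
  map_add' m n := by ext φ; simp
  map_smul' a m := by ext φ; simp

/-- Precomposition with `f`, `Hom_A(N,U) → Hom_A(M,U)`, as a `B`-linear map. -/
def precompMap (A B : Type u) [Ring A] [Ring B] (U : Type u) [AddCommGroup U] [Module A U]
    [Module B U] [SMulCommClass A B U] {M N : Type u} [AddCommGroup M] [Module A M]
    [AddCommGroup N] [Module A N] (f : M →ₗ[A] N) :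
    (N →ₗ[A] U) →ₗ[B] (M →ₗ[A] U) where
  toFun φ := φ.comp f
  map_add' φ ψ := LinearMap.add_comp _ _ _
  map_smul' b φ := rfl

section Aux

variable {A : Type u} [Ring A]

/-- Factor a linear map through a surjection whose kernel it kills. -/
theorem factor_surj {E X Z : Type u} [AddCommGroup E] [Module A E] [AddCommGroup X] [Module A X]
    [AddCommGroup Z] [Module A Z] (p : E →ₗ[A] X) (hp : Function.Surjective p) (σ : E →ₗ[A] Z)
    (h : LinearMap.ker p ≤ LinearMap.ker σ) : ∃ s : X →ₗ[A] Z, ∀ e, s (p e) = σ e := by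
  let q := p.quotKerEquivOfSurjective hp
  refine ⟨(LinearMap.ker p).liftQ σ h ∘ₗ (q.symm : X →ₗ[A] (E ⧸ LinearMap.ker p)), fun e => ?_⟩
  have hq : q (Submodule.Quotient.mk e) = p e := rfl
  have : q.symm (p e) = Submodule.Quotient.mk e := by
    apply q.injective; rw [q.apply_symm_apply, hq]
  simp only [LinearMap.comp_apply, LinearEquiv.coe_coe, this, Submodule.liftQ_apply]

/-- Invert an injection on its range. -/
theorem inv_on_range {U E W : Type u} [AddCommGroup U] [Module A U] [AddCommGroup E] [Module A E]
    [AddCommGroup W] [Module A W] (ι : U →ₗ[A] E) (hι : Function.Injective ι)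
    (q : W →ₗ[A] E) (h : ∀ w, q w ∈ LinearMap.range ι) :
    ∃ r : W →ₗ[A] U, ∀ w, ι (r w) = q w := by
  refine ⟨((LinearEquiv.ofInjective ι hι).symm : LinearMap.range ι →ₗ[A] U) ∘ₗ
    q.codRestrict (LinearMap.range ι) h, fun w => ?_⟩
  have key : ∀ x : LinearMap.range ι, ι ((LinearEquiv.ofInjective ι hι).symm x) = (x : E) := by
    intro x
    conv_rhs => rw [← (LinearEquiv.ofInjective ι hι).apply_symm_apply x]
    rfl
  exact key _

/-- Extend a map to `U` along an injection whose cokernel has vanishing `Ext¹(-,U)`. -/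
theorem ext_extend {U X Y : Type u} [AddCommGroup U] [Module A U] [AddCommGroup X] [Module A X]
    [AddCommGroup Y] [Module A Y] (m : X →ₗ[A] Y) (hm : Function.Injective m)
    (hC : Ext1Vanishes A (Y ⧸ LinearMap.range m) U) (g : X →ₗ[A] U) :
    ∃ G : Y →ₗ[A] U, ∀ x, G (m x) = g x := by
  set T : Submodule A (U × Y) := LinearMap.range (LinearMap.prod g (-m)) with hT
  let mk : (U × Y) →ₗ[A] ((U × Y) ⧸ T) := T.mkQ
  let i₁ : U →ₗ[A] ((U × Y) ⧸ T) := mk ∘ₗ LinearMap.inl A U Y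
  have hTmem : ∀ x : X, ((g x, -m x) : U × Y) ∈ T := fun x => ⟨x, rfl⟩
  have hker : T ≤ LinearMap.ker (((LinearMap.range m).mkQ) ∘ₗ LinearMap.snd A U Y) := by
    rintro _ ⟨x, rfl⟩
    simp only [LinearMap.mem_ker, LinearMap.comp_apply, LinearMap.prod_apply, Function.prod,
      LinearMap.snd_apply, LinearMap.neg_apply, map_neg, neg_eq_zero, Submodule.mkQ_apply,
      Submodule.Quotient.mk_eq_zero]
    exact ⟨x, rfl⟩
  let p₁ : ((U × Y) ⧸ T) →ₗ[A] (Y ⧸ LinearMap.range m) :=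
    T.liftQ (((LinearMap.range m).mkQ) ∘ₗ LinearMap.snd A U Y) hker
  have hp₁mk : ∀ z : U × Y, p₁ (Submodule.Quotient.mk z) = Submodule.Quotient.mk z.2 :=
    fun z => rfl
  have hi₁ : Function.Injective i₁ := by
    rw [← LinearMap.ker_eq_bot, LinearMap.ker_eq_bot']
    intro u hu
    have : ((u, 0) : U × Y) ∈ T := by
      rw [← Submodule.Quotient.mk_eq_zero]; exact hu
    obtain ⟨x, hx⟩ := this
    have hx1 : g x = u := congrArg Prod.fst hx
    have hx2 : -m x = (0 : Y) := congrArg Prod.snd hx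
    have : m x = 0 := by rw [← neg_neg (m x), hx2, neg_zero]
    have : x = 0 := hm (by rw [this, map_zero])
    rw [← hx1, this, map_zero]
  have hps : Function.Surjective p₁ := by
    intro c
    obtain ⟨y, rfl⟩ := Submodule.Quotient.mk_surjective _ c
    exact ⟨Submodule.Quotient.mk ((0 : U), y), hp₁mk _⟩
  have hexact : LinearMap.range i₁ = LinearMap.ker p₁ := by
    apply le_antisymm
    · rintro _ ⟨u, rfl⟩
      show p₁ (Submodule.Quotient.mk ((u, 0) : U × Y)) = 0
      rw [hp₁mk]
      exact (Submodule.Quotient.mk_eq_zero _).mpr (Submodule.zero_mem _)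
    · intro w hw
      obtain ⟨⟨u, y⟩, rfl⟩ := Submodule.Quotient.mk_surjective _ w
      rw [LinearMap.mem_ker, hp₁mk, Submodule.Quotient.mk_eq_zero] at hw
      obtain ⟨x, rfl⟩ := hw
      refine ⟨u + g x, ?_⟩
      show Submodule.Quotient.mk ((u + g x, 0) : U × Y) = Submodule.Quotient.mk (u, m x)
      rw [Submodule.Quotient.eq]
      refine ⟨x, ?_⟩
      show ((g x, -m x) : U × Y) = (u + g x, 0) - (u, m x)
      ext <;> simp
  obtain ⟨s, hs⟩ := hC ((U × Y) ⧸ T) i₁ p₁ hi₁ hps hexact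
  have hsid : ∀ c, p₁ (s c) = c := fun c => congrArg (fun f => f c) hs
  let τ : ((U × Y) ⧸ T) →ₗ[A] ((U × Y) ⧸ T) := LinearMap.id - s ∘ₗ p₁
  have hτ : ∀ w, τ w ∈ LinearMap.range i₁ := by
    intro w
    rw [hexact, LinearMap.mem_ker]
    simp only [τ, LinearMap.sub_apply, LinearMap.id_apply, LinearMap.comp_apply, map_sub, hsid,
      sub_self]
  obtain ⟨r, hr⟩ := inv_on_range i₁ hi₁ τ hτ
  refine ⟨r ∘ₗ mk ∘ₗ LinearMap.inr A U Y, fun x => ?_⟩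
  have h1 : mk ((0 : U), m x) = i₁ (g x) := by
    show Submodule.Quotient.mk ((0 : U), m x) = Submodule.Quotient.mk ((g x, 0) : U × Y)
    rw [Submodule.Quotient.eq]
    refine ⟨-x, ?_⟩
    show ((g (-x), -m (-x)) : U × Y) = (0, m x) - (g x, 0)
    ext <;> simp
  have h2 : τ (i₁ (g x)) = i₁ (g x) := by
    simp only [τ, LinearMap.sub_apply, LinearMap.id_apply, LinearMap.comp_apply]
    have : p₁ (i₁ (g x)) = 0 := by
      have : i₁ (g x) ∈ LinearMap.range i₁ := ⟨g x, rfl⟩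
      rw [hexact] at this; exact this
    rw [this, map_zero, sub_zero]
  have := hr (i₁ (g x))
  rw [h2] at this
  have hrg : r (i₁ (g x)) = g x := hi₁ this
  show r (mk ((0 : U), m x)) = g x
  rw [h1, hrg]

/-- Any module cogenerated by a cotilting module `U` has `Ext¹(-,U) = 0`. -/
theorem cogen_ext1 {U : Type u} [AddCommGroup U] [Module A U] (h : IsCotilting A U)
    {X : Type u} [AddCommGroup X] [Module A X] {β : Type u} (j : X →ₗ[A] (β → U))
    (hj : Function.Injective j) : Ext1Vanishes A X U := by
  obtain ⟨⟨E₀, E₁, hE₀, hE₁, ι, π, hι, hπ, hexact⟩, h2, _⟩ := h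
  intro E _ _ i' p' hi' hp' hex'
  obtain ⟨f, hf⟩ := hE₀.out i' hi' ι
  have hkf : LinearMap.ker p' ≤ LinearMap.ker (π ∘ₗ f) := by
    intro e he
    rw [← hex'] at he
    obtain ⟨u, rfl⟩ := he
    have : π (ι u) = 0 := by
      have : ι u ∈ LinearMap.ker π := hexact ▸ LinearMap.mem_range_self ι u
      exact this
    simp [hf, this]
  obtain ⟨fbar, hfbar⟩ := factor_surj p' hp' (π ∘ₗ f) hkf
  obtain ⟨F, hF⟩ := hE₁.out j hj fbar
  -- pull back `0 → U → E₀ → E₁ → 0` along `F` and split using cotilting condition 2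
  let D : (E₀ × (β → U)) →ₗ[A] E₁ :=
    (π ∘ₗ LinearMap.fst A E₀ (β → U)) - (F ∘ₗ LinearMap.snd A E₀ (β → U))
  let Y' := LinearMap.ker D
  have hmem : ∀ u : U, LinearMap.prod ι (0 : U →ₗ[A] (β → U)) u ∈ Y' := by
    intro u
    have h1 : π (ι u) = 0 := by
      have : ι u ∈ LinearMap.ker π := hexact ▸ LinearMap.mem_range_self ι u
      exact this
    simp [Y', D, LinearMap.mem_ker, h1]
  let ι' : U →ₗ[A] Y' := (LinearMap.prod ι (0 : U →ₗ[A] (β → U))).codRestrict Y' hmem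
  let p₂ : Y' →ₗ[A] (β → U) := (LinearMap.snd A E₀ (β → U)) ∘ₗ Y'.subtype
  have hι' : Function.Injective ι' := by
    intro a b hab
    apply hι
    exact congrArg Prod.fst (congrArg Subtype.val hab)
  have hp₂ : Function.Surjective p₂ := by
    intro v
    obtain ⟨e₀, he₀⟩ := hπ (F v)
    refine ⟨⟨(e₀, v), ?_⟩, rfl⟩
    show π e₀ - F v = 0
    rw [he₀, sub_self]
  have hex₂ : LinearMap.range ι' = LinearMap.ker p₂ := by
    apply le_antisymm
    · rintro _ ⟨u, rfl⟩
      show p₂ (ι' u) = 0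
      rfl
    · rintro ⟨⟨e₀, v⟩, hv⟩ hv0
      have hv0' : v = 0 := hv0
      have : π e₀ - F v = 0 := hv
      rw [hv0', map_zero, sub_zero] at this
      have : e₀ ∈ LinearMap.range ι := by rw [hexact]; exact this
      obtain ⟨u, rfl⟩ := this
      exact ⟨u, by apply Subtype.ext; simp [ι', hv0', LinearMap.codRestrict]⟩
  obtain ⟨t, ht⟩ := h2 β Y' ι' p₂ hι' hp₂ hex₂
  have htid : ∀ v, p₂ (t v) = v := fun v => congrArg (fun f => f v) ht
  let Λ : (β → U) →ₗ[A] E₀ := (LinearMap.fst A E₀ (β → U)) ∘ₗ Y'.subtype ∘ₗ t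
  have hΛ : ∀ v, π (Λ v) = F v := by
    intro v
    have hmem : ((t v : E₀ × (β → U))) ∈ Y' := (t v).2
    have h1 : π (t v : E₀ × (β → U)).1 - F (t v : E₀ × (β → U)).2 = 0 := hmem
    have h2' : (t v : E₀ × (β → U)).2 = v := htid v
    rw [h2'] at h1
    have := sub_eq_zero.mp h1
    exact this
  -- the retraction
  let q : E →ₗ[A] E₀ := f - (Λ ∘ₗ j) ∘ₗ p'
  have hq : ∀ e, q e ∈ LinearMap.range ι := by
    intro e
    rw [hexact, LinearMap.mem_ker]
    simp only [q, LinearMap.sub_apply, LinearMap.comp_apply, map_sub]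
    rw [hΛ, hF, hfbar]
    simp
  obtain ⟨r, hrr⟩ := inv_on_range ι hι q hq
  have hri : ∀ u, r (i' u) = u := by
    intro u
    apply hι
    rw [hrr]
    have hp'i : p' (i' u) = 0 := by
      have : i' u ∈ LinearMap.ker p' := hex' ▸ LinearMap.mem_range_self i' u
      exact this
    simp only [q, LinearMap.sub_apply, LinearMap.comp_apply, hp'i, map_zero, sub_zero, hf]
  -- turn the retraction into a section
  let σ : E →ₗ[A] E := LinearMap.id - i' ∘ₗ r
  have hkσ : LinearMap.ker p' ≤ LinearMap.ker σ := by
    intro e he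
    rw [← hex'] at he
    obtain ⟨u, rfl⟩ := he
    simp only [σ, LinearMap.mem_ker, LinearMap.sub_apply, LinearMap.id_apply,
      LinearMap.comp_apply, hri, sub_self]
  obtain ⟨s, hs⟩ := factor_surj p' hp' σ hkσ
  refine ⟨s, ?_⟩
  apply LinearMap.ext
  intro x
  obtain ⟨e, rfl⟩ := hp' x
  have hpir : ∀ u, p' (i' u) = 0 := by
    intro u
    have : i' u ∈ LinearMap.ker p' := hex' ▸ LinearMap.mem_range_self i' u
    exact this
  simp only [LinearMap.comp_apply, LinearMap.id_apply, hs]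
  simp only [σ, LinearMap.sub_apply, LinearMap.id_apply, LinearMap.comp_apply, map_sub, hpir,
    sub_zero]

/-- The elementary map `w ↦ w x • u` from `Fin n → A` to `U`. -/
def unitMap {n : ℕ} (U : Type u) [AddCommGroup U] [Module A U] (x : Fin n) (u : U) :
    (Fin n → A) →ₗ[A] U where
  toFun w := w x • u
  map_add' w w' := by simp [add_smul]
  map_smul' r w := by simp [mul_smul]

end Aux

/-- for a finitely related left `R`-module `M` over a 1-cotilting bimodule
with `R = End(U_S)`, `Hom_S(Ext¹_R(M,U),U) = 0`, where `Ext¹_R(M,U)` is computed from a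
projective presentation `0 → K → P → M → 0` as `Hom_R(K,U)/im(Hom_R(P,U) → Hom_R(K,U))`. -/
theorem statement19 (R S : Type u) [Ring R] [Ring S] (U : Type u) [AddCommGroup U]
    [Module R U] [Module Sᵐᵒᵖ U] [SMulCommClass R Sᵐᵒᵖ U] [SMulCommClass Sᵐᵒᵖ R U]
    (hRU : IsCotilting R U) (hUS : IsCotilting Sᵐᵒᵖ U)
    (hR : Function.Bijective (Module.toModuleEnd Sᵐᵒᵖ U : R →+* Module.End Sᵐᵒᵖ U))
    (M K P : Type u) [AddCommGroup M] [Module R M] [AddCommGroup K] [Module R K]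
    [AddCommGroup P] [Module R P] [Module.Projective R P] [Module.Finite R K]
    (i : K →ₗ[R] P) (p : P →ₗ[R] M)
    (hi : Function.Injective i) (hp : Function.Surjective p)
    (hex : LinearMap.range i = LinearMap.ker p) :
    ∀ g : ((K →ₗ[R] U) ⧸ LinearMap.range (precompMap R Sᵐᵒᵖ U i)) →ₗ[Sᵐᵒᵖ] U,
      g = 0 := by
  intro g
  let Δi := precompMap R Sᵐᵒᵖ U i
  let G : (K →ₗ[R] U) →ₗ[Sᵐᵒᵖ] U := g ∘ₗ (LinearMap.range Δi).mkQ
  have hG0 : ∀ ψ : P →ₗ[R] U, G (ψ.comp i) = 0 := by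
    intro ψ
    have hmem : ψ.comp i ∈ LinearMap.range Δi := ⟨ψ, rfl⟩
    show g ((LinearMap.range Δi).mkQ (ψ.comp i)) = 0
    rw [Submodule.mkQ_apply, (Submodule.Quotient.mk_eq_zero _).mpr hmem, map_zero]
  -- Step 1: δ_K is surjective, so `G` is evaluation at some `k : K`.
  obtain ⟨n, π, hπ⟩ := Module.Finite.exists_fin' R K
  set Y := (Fin n → R) →ₗ[R] U with hY
  let m : (K →ₗ[R] U) →ₗ[Sᵐᵒᵖ] Y := precompMap R Sᵐᵒᵖ U π
  have hm : Function.Injective m := by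
    rw [← LinearMap.ker_eq_bot, LinearMap.ker_eq_bot']
    intro φ hφ
    apply LinearMap.ext
    intro x
    obtain ⟨w, rfl⟩ := hπ x
    have h0 : (m φ) w = 0 := by rw [hφ]; rfl
    exact h0
  -- the cokernel of `m` embeds into a product of copies of `U` over `Sᵐᵒᵖ`
  let j' : Y →ₗ[Sᵐᵒᵖ] ((LinearMap.ker π) → U) :=
    { toFun := fun ψ x => ψ x.1
      map_add' := fun ψ χ => rfl
      map_smul' := fun s ψ => rfl }
  have hkj : LinearMap.range m ≤ LinearMap.ker j' := by
    rintro _ ⟨φ, rfl⟩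
    apply LinearMap.mem_ker.mpr
    funext x
    show φ (π x.1) = 0
    rw [LinearMap.mem_ker.mp x.2, map_zero]
  let j : (Y ⧸ LinearMap.range m) →ₗ[Sᵐᵒᵖ] ((LinearMap.ker π) → U) :=
    (LinearMap.range m).liftQ j' hkj
  have hj : Function.Injective j := by
    rw [← LinearMap.ker_eq_bot, LinearMap.ker_eq_bot']
    intro c hc
    obtain ⟨ψ, rfl⟩ := Submodule.Quotient.mk_surjective _ c
    have hc' : j' ψ = 0 := hc
    have hkψ : LinearMap.ker π ≤ LinearMap.ker ψ := by
      intro w hw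
      have := congrFun hc' ⟨w, hw⟩
      exact this
    obtain ⟨φ, hφ⟩ := factor_surj (A := R) π hπ ψ hkψ
    rw [Submodule.Quotient.mk_eq_zero]
    refine ⟨φ, ?_⟩
    apply LinearMap.ext
    intro w
    exact hφ w
  have hC : Ext1Vanishes Sᵐᵒᵖ (Y ⧸ LinearMap.range m) U := cogen_ext1 hUS j hj
  obtain ⟨Ghat, hGhat⟩ := ext_extend (A := Sᵐᵒᵖ) m hm hC G
  -- `Ghat` is evaluation at some `w₀ : Fin n → R`, via `R = End(U_S)`
  have unitMap_add : ∀ (x : Fin n) (u u' : U),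
      unitMap (A := R) U x (u + u') = unitMap (A := R) U x u + unitMap (A := R) U x u' := by
    intro x u u'
    apply LinearMap.ext; intro w
    show w x • (u + u') = w x • u + w x • u'
    rw [smul_add]
  have unitMap_smul : ∀ (x : Fin n) (s : Sᵐᵒᵖ) (u : U),
      unitMap (A := R) U x (s • u) = s • unitMap (A := R) U x u := by
    intro x s u
    apply LinearMap.ext; intro w
    show w x • (s • u) = s • (w x • u)
    rw [smul_comm]
  let ev : Fin n → (U →ₗ[Sᵐᵒᵖ] U) := fun x =>
    { toFun := fun u => Ghat (unitMap (A := R) U x u)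
      map_add' := fun u u' => by rw [unitMap_add, map_add]
      map_smul' := fun s u => by rw [unitMap_smul, map_smul]; rfl }
  choose rr hrr using fun x => hR.2 (ev x)
  have hev : ∀ (x : Fin n) (u : U), Ghat (unitMap (A := R) U x u) = rr x • u := by
    intro x u
    have := congrArg (fun f : Module.End Sᵐᵒᵖ U => f u) (hrr x)
    exact this.symm
  set w₀ : Fin n → R := fun x => rr x with hw₀
  have eval_sum : ∀ (ψ : Y) (w : Fin n → R), ψ w = ∑ x, w x • ψ (fun jj => if x = jj then 1 else 0) := by
    intro ψ w
    conv_lhs => rw [pi_eq_sum_univ w, map_sum]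
    refine Finset.sum_congr rfl fun x _ => ?_
    rw [map_smul]
  have hdecomp : ∀ ψ : Y, ψ = ∑ x, unitMap (A := R) U x (ψ (fun jj => if x = jj then 1 else 0)) := by
    intro ψ
    apply LinearMap.ext
    intro w
    rw [eval_sum ψ w, LinearMap.sum_apply]
    rfl
  have hGhateval : ∀ ψ : Y, Ghat ψ = ψ w₀ := by
    intro ψ
    conv_lhs => rw [hdecomp ψ, map_sum]
    rw [eval_sum ψ w₀]
    refine Finset.sum_congr rfl fun x _ => ?_
    rw [hev]
  set k : K := π w₀ with hk
  have hGk : ∀ φ : K →ₗ[R] U, G φ = φ k := by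
    intro φ
    have h1 : G φ = Ghat (m φ) := (hGhat φ).symm
    rw [h1, hGhateval]
    rfl
  -- Step 2: `i k` is annihilated by all of `Hom(P, U)`, hence `i k = 0` by torsionlessness of `P`
  have hik : ∀ ψ : P →ₗ[R] U, ψ (i k) = 0 := by
    intro ψ
    have := hG0 ψ
    rw [hGk (ψ.comp i)] at this
    exact this
  have hik0 : i k = 0 := by
    by_contra hne
    obtain ⟨sP, hsP⟩ := Module.projective_def.mp ‹Module.Projective R P›
    have hsPinj : Function.Injective sP := Function.LeftInverse.injective hsP
    have hsne : sP (i k) ≠ 0 := by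
      intro h0
      apply hne
      have h00 : sP (i k) = sP 0 := by rw [h0, map_zero]
      exact hsPinj h00
    obtain ⟨x, hx⟩ := Finsupp.ne_iff.mp (by simpa using hsne)
    have hx' : sP (i k) x ≠ 0 := by simpa using hx
    -- find `u` with `sP (i k) x • u ≠ 0` using injectivity of `R → End(U_S)`
    have : ∃ u : U, sP (i k) x • u ≠ 0 := by
      by_contra hall
      push_neg at hall
      apply hx'
      apply hR.1
      apply LinearMap.ext
      intro u
      show sP (i k) x • u = (0 : R) • u
      rw [hall u, zero_smul]
    obtain ⟨u, hu⟩ := this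
    let ψ : P →ₗ[R] U :=
      (LinearMap.toSpanSingleton R U u) ∘ₗ (Finsupp.lapply x) ∘ₗ sP
    apply hu
    have := hik ψ
    simpa [ψ, LinearMap.toSpanSingleton_apply] using this
  have hk0 : k = 0 := hi (by rw [hik0, map_zero])
  -- conclude
  apply LinearMap.ext
  intro c
  obtain ⟨φ, rfl⟩ := Submodule.Quotient.mk_surjective _ c
  have h1 : g (Submodule.Quotient.mk φ) = G φ := rfl
  have h2 : G φ = 0 := by rw [hGk, hk0, map_zero]
  show g (Submodule.Quotient.mk φ) = 0
  exact h1.trans h2
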